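/- arXiv:2010.03304 — 2 statements merged into one kernel-verified Lean document; each statement's English description precedes it below -/
import Mathlib

section
/- Let p be a prime and let n_1, ..., n_{i-1} be positive integers. Let b_1, ..., b_{i-1} be positive integers each coprime to p, and define m_v = p^{n_{v+1} + ... + n_{i-1}} * b_v for 1 ≤ v ≤ i-1 (so m_{i-1} = b_{i-1}), and G = p^{n_1 + ... + n_{i-1}}. Suppose (ℓ_0, ..., ℓ_{i-1}) and (w_0, ..., w_{i-1}) are tuples of natural numbers with 1 ≤ ℓ_λ < p^{n_λ} and 1 ≤ w_λ < p^{n_λ} for all 1 ≤ λ ≤ i-1, and ℓ_0·G + ℓ_1·m_1 + ... + ℓ_{i-1}·m_{i-1} = w_0·G + w_1·m_1 + ... + w_{i-1}·m_{i-1}. Then ℓ_λ = w_λ for all 0 ≤ λ ≤ i-1. -/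
open Finset in
lemma key_aux (p : ℕ) (hp : p.Prime) :
    ∀ (k : ℕ) (n b ℓ w : ℕ → ℕ),
    (∀ v ∈ Finset.Icc 1 k, Nat.Coprime (b v) p) →
    (∀ v ∈ Finset.Icc 1 k, ℓ v < p ^ n v) →
    (∀ v ∈ Finset.Icc 1 k, w v < p ^ n v) →
    (ℓ 0 * p ^ (∑ u ∈ Finset.Icc 1 k, n u)
        + ∑ v ∈ Finset.Icc 1 k, ℓ v * (p ^ (∑ u ∈ Finset.Icc (v + 1) k, n u) * b v)
      = w 0 * p ^ (∑ u ∈ Finset.Icc 1 k, n u)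
        + ∑ v ∈ Finset.Icc 1 k, w v * (p ^ (∑ u ∈ Finset.Icc (v + 1) k, n u) * b v)) →
    ∀ v ≤ k, ℓ v = w v := by
  intro k
  induction k with
  | zero =>
    intro n b ℓ w hb hℓ hw heq v hv
    interval_cases v
    simpa using heq
  | succ k ih =>
    intro n b ℓ w hb hℓ hw heq
    set N := n (k + 1) with hN
    set M := p ^ N with hM
    have hMpos : 0 < M := Nat.pow_pos hp.pos
    have hmemtop : k + 1 ∈ Finset.Icc 1 (k + 1) := by simp
    -- rewrite the sums
    have hsum : ∀ (f : ℕ → ℕ),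
        ∑ v ∈ Finset.Icc 1 (k + 1), f v * (p ^ (∑ u ∈ Finset.Icc (v + 1) (k + 1), n u) * b v)
          = (∑ v ∈ Finset.Icc 1 k, f v * (p ^ (∑ u ∈ Finset.Icc (v + 1) k, n u) * b v)) * M
            + f (k + 1) * b (k + 1) := by
      intro f
      rw [Finset.sum_Icc_succ_top (by omega : 1 ≤ k + 1), Finset.sum_mul]
      congr 1
      · apply Finset.sum_congr rfl
        intro v hv
        have hv' := Finset.mem_Icc.mp hv
        rw [Finset.sum_Icc_succ_top (by omega : v + 1 ≤ k + 1), pow_add]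
        ring
      · have : Finset.Icc (k + 1 + 1) (k + 1) = ∅ := by
          apply Finset.Icc_eq_empty; omega
        rw [this]
        simp
    have htot : ∀ (f : ℕ → ℕ), f 0 * p ^ (∑ u ∈ Finset.Icc 1 (k + 1), n u)
        = (f 0 * p ^ (∑ u ∈ Finset.Icc 1 k, n u)) * M := by
      intro f
      rw [Finset.sum_Icc_succ_top (by omega : 1 ≤ k + 1), pow_add]
      ring
    rw [hsum ℓ, hsum w, htot ℓ, htot w] at heq
    set A := ℓ 0 * p ^ (∑ u ∈ Finset.Icc 1 k, n u)
      + ∑ v ∈ Finset.Icc 1 k, ℓ v * (p ^ (∑ u ∈ Finset.Icc (v + 1) k, n u) * b v) with hA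
    set B := w 0 * p ^ (∑ u ∈ Finset.Icc 1 k, n u)
      + ∑ v ∈ Finset.Icc 1 k, w v * (p ^ (∑ u ∈ Finset.Icc (v + 1) k, n u) * b v) with hB
    have heq' : A * M + ℓ (k + 1) * b (k + 1) = B * M + w (k + 1) * b (k + 1) := by
      rw [hA, hB, add_mul, add_mul]; omega
    -- mod p^N
    have hBA : B * M ≡ A * M [MOD M] := by
      unfold Nat.ModEq
      simp [Nat.mul_mod_left]
    have h2 : A * M + ℓ (k + 1) * b (k + 1) ≡ A * M + w (k + 1) * b (k + 1) [MOD M] := by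
      calc A * M + ℓ (k + 1) * b (k + 1) = B * M + w (k + 1) * b (k + 1) := heq'
        _ ≡ A * M + w (k + 1) * b (k + 1) [MOD M] := hBA.add_right _
    have h3 : ℓ (k + 1) * b (k + 1) ≡ w (k + 1) * b (k + 1) [MOD M] :=
      Nat.ModEq.add_left_cancel' _ h2
    have hcop : Nat.Coprime (b (k + 1)) M := (hb _ hmemtop).pow_right _
    have h4 : ℓ (k + 1) ≡ w (k + 1) [MOD M] :=
      h3.cancel_right_of_coprime hcop.symm
    have htopeq : ℓ (k + 1) = w (k + 1) := by
      have h5 := h4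
      unfold Nat.ModEq at h5
      rw [Nat.mod_eq_of_lt (hℓ _ hmemtop), Nat.mod_eq_of_lt (hw _ hmemtop)] at h5
      exact h5
    have hAB : A = B := by
      have : A * M = B * M := by rw [htopeq] at heq'; omega
      exact Nat.eq_of_mul_eq_mul_right hMpos this
    have hrec := ih n b ℓ w
      (fun v hv => hb v (Finset.Icc_subset_Icc_right (by omega) hv))
      (fun v hv => hℓ v (Finset.Icc_subset_Icc_right (by omega) hv))
      (fun v hv => hw v (Finset.Icc_subset_Icc_right (by omega) hv))
      hAB
    intro v hv
    rcases Nat.lt_or_ge v (k + 1) with h | h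
    · exact hrec v (by omega)
    · have : v = k + 1 := by omega
      rw [this]
      exact htopeq

open Finset in
theorem stmt_0 (p i : ℕ) (hp : p.Prime) (hi : 1 ≤ i) (n b ℓ w : ℕ → ℕ)
    (hn : ∀ v ∈ Finset.Icc 1 (i - 1), 0 < n v)
    (hb : ∀ v ∈ Finset.Icc 1 (i - 1), 0 < b v ∧ Nat.Coprime (b v) p)
    (hℓ : ∀ v ∈ Finset.Icc 1 (i - 1), 1 ≤ ℓ v ∧ ℓ v < p ^ n v)
    (hw : ∀ v ∈ Finset.Icc 1 (i - 1), 1 ≤ w v ∧ w v < p ^ n v)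
    (heq : ℓ 0 * p ^ (∑ u ∈ Finset.Icc 1 (i - 1), n u)
        + ∑ v ∈ Finset.Icc 1 (i - 1), ℓ v * (p ^ (∑ u ∈ Finset.Icc (v + 1) (i - 1), n u) * b v)
      = w 0 * p ^ (∑ u ∈ Finset.Icc 1 (i - 1), n u)
        + ∑ v ∈ Finset.Icc 1 (i - 1), w v * (p ^ (∑ u ∈ Finset.Icc (v + 1) (i - 1), n u) * b v)) :
    ∀ v ≤ i - 1, ℓ v = w v :=
  key_aux p hp (i - 1) n b ℓ w (fun v hv => (hb v hv).2)
    (fun v hv => (hℓ v hv).2) (fun v hv => (hw v hv).2) heq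
end

section
/- Let m and q be coprime integers with m, q ≥ 2, and set g = (m − 1)(q − 1)/2. Then the number of pairs (i_0, i_1) ∈ ℕ² with i_0·q + i_1·m ≤ 2g − 2 equals g. -/
theorem stmt_6 (m q g : ℕ) (hm : 2 ≤ m) (hq : 2 ≤ q) (hcop : Nat.Coprime m q)
    (hg : g = (m - 1) * (q - 1) / 2) :
    {x : ℕ × ℕ | x.1 * q + x.2 * m ≤ 2 * g - 2}.ncard = g := by
  -- not both equal to 2
  have hne : ¬ (m = 2 ∧ q = 2) := by
    rintro ⟨rfl, rfl⟩
    simp [Nat.Coprime] at hcop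
  -- evenness of (m-1)*(q-1)
  have h2dvd : 2 ∣ (m - 1) * (q - 1) := by
    rcases Nat.even_or_odd m with he | ho
    · have hqo : ¬ 2 ∣ q := by
        intro h
        have : (2:ℕ) ∣ 1 := hcop ▸ Nat.dvd_gcd he.two_dvd h
        omega
      exact Dvd.dvd.mul_left (by omega) _
    · have : 2 ∣ m - 1 := by
        rcases ho with ⟨k, hk⟩; omega
      exact Dvd.dvd.mul_right this _
  have h2g : 2 * g = (m - 1) * (q - 1) := by
    rw [hg]; exact Nat.mul_div_cancel' h2dvd
  -- key polynomial identities
  have hid : (m - 1) * (q - 1) + m + q = m * q + 1 := by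
    obtain ⟨a, rfl⟩ : ∃ a, m = a + 2 := ⟨m - 2, by omega⟩
    obtain ⟨b, rfl⟩ : ∃ b, q = b + 2 := ⟨q - 2, by omega⟩
    show (a + 1) * (b + 1) + (a + 2) + (b + 2) = (a + 2) * (b + 2) + 1
    ring
  have hA : (m - 1) * q = (m - 1) * (q - 1) + (m - 1) := by
    obtain ⟨a, rfl⟩ : ∃ a, m = a + 2 := ⟨m - 2, by omega⟩
    obtain ⟨b, rfl⟩ : ∃ b, q = b + 2 := ⟨q - 2, by omega⟩
    show (a + 1) * (b + 2) = (a + 1) * (b + 1) + (a + 1)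
    ring
  have hB : (q - 1) * m = (m - 1) * (q - 1) + (q - 1) := by
    obtain ⟨a, rfl⟩ : ∃ a, m = a + 2 := ⟨m - 2, by omega⟩
    obtain ⟨b, rfl⟩ : ∃ b, q = b + 2 := ⟨q - 2, by omega⟩
    show (b + 1) * (a + 2) = (a + 1) * (b + 1) + (b + 1)
    ring
  have hC : (m - 2) * q + (q - 2) * m + 2 = 2 * ((m - 1) * (q - 1)) := by
    obtain ⟨a, rfl⟩ : ∃ a, m = a + 2 := ⟨m - 2, by omega⟩
    obtain ⟨b, rfl⟩ : ∃ b, q = b + 2 := ⟨q - 2, by omega⟩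
    show a * (b + 2) + b * (a + 2) + 2 = 2 * ((a + 1) * (b + 1))
    ring
  have hge2 : 2 ≤ (m - 1) * (q - 1) := by
    rcases Nat.lt_or_ge m 3 with h | h
    · have hq3 : 3 ≤ q := by
        rcases Nat.lt_or_ge q 3 with h' | h'
        · exact absurd ⟨by omega, by omega⟩ hne
        · exact h'
      calc 2 = 1 * 2 := rfl
        _ ≤ (m - 1) * (q - 1) := Nat.mul_le_mul (by omega) (by omega)
    · calc 2 = 2 * 1 := rfl
        _ ≤ (m - 1) * (q - 1) := Nat.mul_le_mul (by omega) (by omega)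
  -- the "middle value" 2*g - 1 is not attained
  have hmid : ∀ i j : ℕ, i < m - 1 → j < q - 1 → i * q + j * m + 1 ≠ 2 * g := by
    intro i j hi hj heq
    have hk : (i + 1) * q + (j + 1) * m = m * q := by
      have e1 : (i + 1) * q = i * q + q := by ring
      have e2 : (j + 1) * m = j * m + m := by ring
      rw [e1, e2]
      set A := i * q; set B := j * m; set C := (m - 1) * (q - 1); set D := m * q
      omega
    have h1 : m ∣ (i + 1) * q + (j + 1) * m := hk ▸ ⟨q, rfl⟩
    have h2 : m ∣ (j + 1) * m := ⟨j + 1, mul_comm _ _⟩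
    have h3 : m ∣ (i + 1) * q := (Nat.dvd_add_iff_left h2).mpr h1
    have h4 : m ∣ i + 1 := hcop.dvd_of_dvd_mul_right h3
    have h5 : m ≤ i + 1 := Nat.le_of_dvd (by omega) h4
    omega
  classical
  set F : Finset (ℕ × ℕ) := Finset.range (m - 1) ×ˢ Finset.range (q - 1) with hF
  set P : ℕ × ℕ → Prop := fun x => x.1 * q + x.2 * m ≤ 2 * g - 2 with hP
  -- the set is the filtered finset
  have hset : {x : ℕ × ℕ | x.1 * q + x.2 * m ≤ 2 * g - 2} = ↑(F.filter P) := by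
    ext ⟨i, j⟩
    simp only [Set.mem_setOf_eq, Finset.coe_filter, hF, hP, Finset.mem_product,
      Finset.mem_range, Set.mem_setOf_eq]
    constructor
    · intro h
      refine ⟨⟨?_, ?_⟩, h⟩
      · by_contra hc
        push_neg at hc
        have h1 : (m - 1) * q ≤ i * q := Nat.mul_le_mul_right q hc
        have h2 : i * q ≤ i * q + j * m := Nat.le_add_right _ _
        set A := i * q + j * m
        set B := i * q
        set C := (m - 1) * (q - 1)
        set D := (m - 1) * q
        omega
      · by_contra hc
        push_neg at hc
        have h1 : (q - 1) * m ≤ j * m := Nat.mul_le_mul_right m hc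
        have h2 : j * m ≤ i * q + j * m := Nat.le_add_left _ _
        set A := i * q + j * m
        set B := j * m
        set C := (m - 1) * (q - 1)
        set D := (q - 1) * m
        omega
    · exact fun h => h.2
  rw [hset, Set.ncard_coe_finset]
  -- bijection between filter P and filter ¬P
  have hbij : (F.filter P).card = (F.filter fun x => ¬ P x).card := by
    apply Finset.card_nbij' (fun x => (m - 2 - x.1, q - 2 - x.2))
      (fun x => (m - 2 - x.1, q - 2 - x.2))
    · intro ⟨i, j⟩ hx
      simp only [Finset.mem_coe, Finset.mem_filter, hF, hP, Finset.mem_product, Finset.mem_range] at hx ⊢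
      obtain ⟨⟨hi, hj⟩, hle⟩ := hx
      have hsum : (i * q + j * m) + ((m - 2 - i) * q + (q - 2 - j) * m) + 2
          = 2 * ((m - 1) * (q - 1)) := by
        have e1 : i * q + (m - 2 - i) * q = (m - 2) * q := by
          rw [← Nat.add_mul]; congr 1; omega
        have e2 : j * m + (q - 2 - j) * m = (q - 2) * m := by
          rw [← Nat.add_mul]; congr 1; omega
        set A := i * q; set B := j * m; set A' := (m - 2 - i) * q
        set B' := (q - 2 - j) * m
        set X := (m - 2) * q; set Y := (q - 2) * m
        set C := (m - 1) * (q - 1)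
        omega
      refine ⟨⟨by omega, by omega⟩, ?_⟩
      set A := i * q + j * m
      set A' := (m - 2 - i) * q + (q - 2 - j) * m
      set C := (m - 1) * (q - 1)
      omega
    · intro ⟨i, j⟩ hx
      simp only [Finset.mem_coe, Finset.mem_filter, hF, hP, Finset.mem_product, Finset.mem_range] at hx ⊢
      obtain ⟨⟨hi, hj⟩, hle⟩ := hx
      push_neg at hle
      have hsum : (i * q + j * m) + ((m - 2 - i) * q + (q - 2 - j) * m) + 2
          = 2 * ((m - 1) * (q - 1)) := by
        have e1 : i * q + (m - 2 - i) * q = (m - 2) * q := by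
          rw [← Nat.add_mul]; congr 1; omega
        have e2 : j * m + (q - 2 - j) * m = (q - 2) * m := by
          rw [← Nat.add_mul]; congr 1; omega
        set A := i * q; set B := j * m; set A' := (m - 2 - i) * q
        set B' := (q - 2 - j) * m
        set X := (m - 2) * q; set Y := (q - 2) * m
        set C := (m - 1) * (q - 1)
        omega
      have hne' : i * q + j * m + 1 ≠ 2 * g := hmid i j hi hj
      refine ⟨⟨by omega, by omega⟩, ?_⟩
      set A := i * q + j * m
      set A' := (m - 2 - i) * q + (q - 2 - j) * m
      set C := (m - 1) * (q - 1)
      omega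
    · intro ⟨i, j⟩ hx
      simp only [Finset.mem_coe, Finset.mem_filter, hF, Finset.mem_product, Finset.mem_range] at hx
      obtain ⟨⟨hi, hj⟩, -⟩ := hx
      simp only [Prod.mk.injEq]
      constructor <;> omega
    · intro ⟨i, j⟩ hx
      simp only [Finset.mem_coe, Finset.mem_filter, hF, Finset.mem_product, Finset.mem_range] at hx
      obtain ⟨⟨hi, hj⟩, -⟩ := hx
      simp only [Prod.mk.injEq]
      constructor <;> omega
  have hcard : (F.filter P).card + (F.filter fun x => ¬ P x).card = F.card :=
    Finset.card_filter_add_card_filter_not P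
  have hFcard : F.card = (m - 1) * (q - 1) := by
    simp [hF, Finset.card_product]
  set u := (F.filter P).card
  set v := (F.filter fun x => ¬ P x).card
  set C := (m - 1) * (q - 1)
  omega
end
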